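/- Let K be a compact Hausdorff space and f ∈ C(K). Then sup{ ‖s·f + t·1‖_∞ : s, t ∈ ℂ, |s|² + |t|² = 1 } = √(1 + ‖f‖_∞²). In particular, if ‖f‖_∞ = 1 this supremum equals √2. -/

import Mathlib

/-- For `f ∈ C(K)`, `sup { ‖s f + t 1‖ : |s|² + |t|² = 1 } = √(1 + ‖f‖²)`. -/
theorem stmt17 {K : Type*} [TopologicalSpace K] [CompactSpace K] [T2Space K] [Nonempty K]
    (f : C(K, ℂ)) :
    sSup {r : ℝ | ∃ s t : ℂ, ‖s‖ ^ 2 + ‖t‖ ^ 2 = 1 ∧ r = ‖s • f + t • (1 : C(K, ℂ))‖}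
      = Real.sqrt (1 + ‖f‖ ^ 2) := by
  set M : ℝ := ‖f‖ with hMdef
  have hM : 0 ≤ M := norm_nonneg f
  set R : ℝ := Real.sqrt (1 + M ^ 2) with hRdef
  have hRpos : 0 < R := Real.sqrt_pos.mpr (by positivity)
  have hR2 : R ^ 2 = 1 + M ^ 2 := Real.sq_sqrt (by positivity)
  -- upper bound
  have bound : ∀ s t : ℂ, ‖s‖ ^ 2 + ‖t‖ ^ 2 = 1 →
      ‖s • f + t • (1 : C(K, ℂ))‖ ≤ R := by
    intro s t hst
    rw [ContinuousMap.norm_le _ hRpos.le]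
    intro x
    have hx : (s • f + t • (1 : C(K, ℂ))) x = s * f x + t := by
      simp [ContinuousMap.add_apply, ContinuousMap.smul_apply]
    rw [hx]
    have h1 : ‖s * f x + t‖ ≤ ‖s‖ * ‖f x‖ + ‖t‖ := by
      calc ‖s * f x + t‖ ≤ ‖s * f x‖ + ‖t‖ := norm_add_le _ _
        _ = ‖s‖ * ‖f x‖ + ‖t‖ := by rw [norm_mul]
    have hfx : ‖f x‖ ≤ M := f.norm_coe_le_norm x
    have ha : (0:ℝ) ≤ ‖s‖ := norm_nonneg s
    have hb : (0:ℝ) ≤ ‖f x‖ := norm_nonneg _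
    have hc : (0:ℝ) ≤ ‖t‖ := norm_nonneg t
    have hsq : (‖s‖ * ‖f x‖ + ‖t‖) ^ 2 ≤ R ^ 2 := by
      have hb2 : ‖f x‖ ^ 2 ≤ M ^ 2 := pow_le_pow_left₀ hb hfx 2
      have hprod : (‖s‖ ^ 2 + ‖t‖ ^ 2) * ‖f x‖ ^ 2 = ‖f x‖ ^ 2 := by rw [hst, one_mul]
      nlinarith [sq_nonneg (‖s‖ - ‖t‖ * ‖f x‖), hb2, hprod]
    nlinarith [hsq, norm_nonneg (s * f x + t)]
  -- attainment
  obtain ⟨x₀, hx₀⟩ : ∃ x₀, ∀ y, ‖f y‖ ≤ ‖f x₀‖ := by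
    obtain ⟨x₀, -, h⟩ := isCompact_univ.exists_isMaxOn Set.univ_nonempty
      ((map_continuous f).norm.continuousOn)
    exact ⟨x₀, fun y => h (Set.mem_univ y)⟩
  have hfx₀ : ‖f x₀‖ = M := by
    refine le_antisymm (f.norm_coe_le_norm x₀) ?_
    exact (ContinuousMap.norm_le _ (norm_nonneg _)).mpr hx₀
  set s₀ : ℂ := (starRingEnd ℂ) (f x₀) / (R : ℂ)
  set t₀ : ℂ := ((R : ℂ))⁻¹
  have hRne : (R : ℂ) ≠ 0 := by
    exact_mod_cast (Complex.ofReal_ne_zero).mpr hRpos.ne'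
  have hnorms : ‖s₀‖ ^ 2 + ‖t₀‖ ^ 2 = 1 := by
    have h1 : ‖s₀‖ = M / R := by
      simp [s₀, norm_div, hfx₀, Complex.norm_real, abs_of_pos hRpos]
    have h2 : ‖t₀‖ = 1 / R := by
      simp [t₀, norm_inv, Complex.norm_real, abs_of_pos hRpos]
    rw [h1, h2]
    field_simp
    linarith [hR2]
  have hval : ‖s₀ • f + t₀ • (1 : C(K, ℂ))‖ = R := by
    refine le_antisymm (bound _ _ hnorms) ?_
    have hev : (s₀ • f + t₀ • (1 : C(K, ℂ))) x₀ = (R : ℂ) := by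
      have : (s₀ • f + t₀ • (1 : C(K, ℂ))) x₀ = s₀ * f x₀ + t₀ := by
        simp [ContinuousMap.add_apply, ContinuousMap.smul_apply]
      rw [this]
      have hmul : (starRingEnd ℂ) (f x₀) * f x₀ = ((M ^ 2 : ℝ) : ℂ) := by
        rw [mul_comm, Complex.mul_conj]
        rw [Complex.normSq_eq_norm_sq, hfx₀]
      show (starRingEnd ℂ) (f x₀) / (R : ℂ) * f x₀ + ((R : ℂ))⁻¹ = (R : ℂ)
      rw [div_mul_eq_mul_div, hmul]
      field_simp
      norm_cast
      nlinarith [hR2]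
    calc R = ‖(s₀ • f + t₀ • (1 : C(K, ℂ))) x₀‖ := by
          rw [hev]; simp [Complex.norm_real, abs_of_pos hRpos]
      _ ≤ _ := (s₀ • f + t₀ • (1 : C(K, ℂ))).norm_coe_le_norm x₀
  have hmem : R ∈ {r : ℝ | ∃ s t : ℂ, ‖s‖ ^ 2 + ‖t‖ ^ 2 = 1 ∧
      r = ‖s • f + t • (1 : C(K, ℂ))‖} :=
    ⟨s₀, t₀, hnorms, hval.symm⟩
  refine le_antisymm ?_ ?_
  · refine csSup_le ⟨R, hmem⟩ ?_
    rintro r ⟨s, t, hst, rfl⟩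
    exact bound s t hst
  · refine le_csSup ⟨R, ?_⟩ hmem
    rintro r ⟨s, t, hst, rfl⟩
    exact bound s t hst
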